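/- There is a constant C > 0 such that, for every even k > 2, every ξ ∈ {-1,1}, every non-root non-leaf vertex v of a perfect k-ary tree T with uniformly random initial opinions, and every integer t ≥ 2, the probability that v is (≤ t)-stable with ξ_t(v) = ξ is at least 2^{-Ctk}. -/

import Mathlib

open SimpleGraph Set

variable {V : Type*}

/-- The majority-dynamics process generated by the initial opinion vector `σ`:
`ξ (t+1) v` is the sign of the sum of the opinions `ξ t` over the neighbours of `v`. -/
noncomputable def dyn (G : SimpleGraph V) (σ : V → ℤ) : ℕ → V → ℤ
  | 0 => σ
  | t + 1 => fun v => if 0 < ∑ᶠ u ∈ G.neighborSet v, dyn G σ t u then 1 else -1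

/-- `σ` is a valid vector of opinions, i.e. takes values in `{-1, 1}`. -/
def PM (σ : V → ℤ) : Prop := ∀ v, σ v = 1 ∨ σ v = -1

/-- The degree of a vertex. -/
noncomputable def degree' (G : SimpleGraph V) (v : V) : ℕ := (G.neighborSet v).ncard

/-- A leaf is a vertex of degree 1. -/
def IsLeaf (G : SimpleGraph V) (v : V) : Prop := degree' G v = 1

/-- The number of neighbours of `v` that are leaves. -/
noncomputable def leafNbrs (G : SimpleGraph V) (v : V) : ℕ := {u | G.Adj v u ∧ IsLeaf G u}.ncard

/-- All degrees of `G` are odd. -/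
def OddDegrees (G : SimpleGraph V) : Prop := ∀ v, Odd (degree' G v)

/-- `v` is `t`-stable for the process `ξ`. -/
def Stable (ξ : ℕ → V → ℤ) (v : V) (t : ℕ) : Prop :=
  ∀ s, t ≤ s → s % 2 = t % 2 → ξ (s + 2) v = ξ s v

/-- `G` is a perfect `k`-ary tree of height `h` rooted at `R`. -/
noncomputable def IsPerfectKAry (G : SimpleGraph V) (R : V) (k h : ℕ) : Prop :=
  G.IsTree ∧ (∀ v, degree' G v = 1 ∨ degree' G v = k + 1) ∧
    (∀ v, degree' G v = 1 → G.dist R v = h) ∧ degree' G R = k + 1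

/-- The set of descendants of `v` (including `v`) in the tree rooted at `R`:
those vertices `u` such that `v` lies on the (unique) geodesic from `R` to `u`. -/
noncomputable def desc (G : SimpleGraph V) (R v : V) : Set V :=
  {u | G.dist R u = G.dist R v + G.dist v u}

/-- `p` is the parent of `c` in the tree rooted at `R`. -/
noncomputable def IsParent (G : SimpleGraph V) (R p c : V) : Prop :=
  G.Adj p c ∧ G.dist R p + 1 = G.dist R c

/-- `v` is weakly `t`-stable for the process `ξ` (in the tree rooted at `R`): there is a
vector of initial opinions agreeing with `ξ t` on the subtree of descendants of `v` for
which `v` is 0-stable. -/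
noncomputable def WeaklyStable (G : SimpleGraph V) (R : V) (ξ : ℕ → V → ℤ) (v : V)
    (t : ℕ) : Prop :=
  ∃ σ' : V → ℤ, PM σ' ∧ (∀ w ∈ desc G R v, σ' w = ξ t w) ∧
    ∀ s, s % 2 = 0 → dyn G σ' (s + 2) v = dyn G σ' s v

/-- Translation of boolean labels into `±1` opinions. -/
def signify (b : V → Bool) : V → ℤ := fun v => if b v then 1 else -1

/-- `v` is `(≤ t)`-stable w.r.t. `σ`: for every initial opinion vector agreeing with `σ`
on the subtree of descendants of `v`, the opinion of `v` at every time `t' < t` of the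
same parity as `t` coincides with its opinion at time `t`. -/
noncomputable def LeStable (G : SimpleGraph V) (R : V) (σ : V → ℤ) (v : V)
    (t : ℕ) : Prop :=
  ∀ σ' : V → ℤ, PM σ' → (∀ w ∈ desc G R v, σ' w = σ w) →
    ∀ t' < t, t' % 2 = t % 2 → dyn G σ' t' v = dyn G σ' t v


namespace MajAux

variable {V : Type*} {G : SimpleGraph V} {R : V}

lemma tree_path_length (hT : G.IsTree) {x y : V} (p : G.Walk x y) (hp : p.IsPath) :
    p.length = G.dist x y := by
  obtain ⟨q, hq, hl⟩ := hT.isConnected.exists_path_of_dist x y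
  rw [(hT.existsUnique_path x y).unique hp hq, hl]

lemma adj_dist_step (hT : G.IsTree) {x y : V} (h : G.Adj x y) (R : V) :
    G.dist R y = G.dist R x + 1 ∨ G.dist R x = G.dist R y + 1 := by
  obtain ⟨p, hp, hl⟩ := hT.isConnected.exists_path_of_dist R x
  by_cases hy : y ∈ p.support
  · obtain ⟨q, r, rfl⟩ := SimpleGraph.Walk.mem_support_iff_exists_append.mp hy
    have hq : q.IsPath := hp.of_append_left
    have hr : r.IsPath := hp.of_append_right
    have h1 : q.length = G.dist R y := tree_path_length hT q hq
    have h2 : r.length = G.dist y x := tree_path_length hT r hr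
    have h3 : G.dist y x = 1 := by
      rw [SimpleGraph.dist_eq_one_iff_adj]; exact h.symm
    right
    rw [← hl, SimpleGraph.Walk.length_append, h1, h2, h3]
  · left
    have hpath : (p.concat h).IsPath := by
      rw [← SimpleGraph.Walk.isPath_reverse_iff, SimpleGraph.Walk.reverse_concat]
      exact (hp.reverse.cons (by simpa using hy))
    have := tree_path_length hT (p.concat h) hpath
    rw [SimpleGraph.Walk.length_concat, hl] at this
    omega

lemma exists_parent (hT : G.IsTree) {x : V} (R : V) (hx : x ≠ R) :
    ∃ p, G.Adj x p ∧ G.dist R p + 1 = G.dist R x := by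
  obtain ⟨q, hq, hl⟩ := hT.isConnected.exists_path_of_dist x R
  cases q with
  | nil => exact absurd rfl hx
  | cons hadj q' =>
    rename_i w
    refine ⟨w, hadj, ?_⟩
    have h1 : q'.length = G.dist w R := tree_path_length hT q' hq.of_cons
    rw [SimpleGraph.Walk.length_cons] at hl
    have e1 : G.dist R w = G.dist w R := SimpleGraph.dist_comm
    have e2 : G.dist R x = G.dist x R := SimpleGraph.dist_comm
    omega

lemma parent_unique (hT : G.IsTree) {x p₁ p₂ R : V}
    (h₁ : G.Adj x p₁) (hd₁ : G.dist R p₁ + 1 = G.dist R x)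
    (h₂ : G.Adj x p₂) (hd₂ : G.dist R p₂ + 1 = G.dist R x) : p₁ = p₂ := by
  have key : ∀ (pp : V), G.Adj x pp → G.dist R pp + 1 = G.dist R x →
      ∃ (P : G.Walk R x), P.IsPath ∧ pp ∈ P.support ∧ G.dist R pp = P.length - 1 := by
    intro pp hadj hd
    obtain ⟨P, hP, hPl⟩ := hT.isConnected.exists_path_of_dist R pp
    have hxs : x ∉ P.support := by
      intro hxmem
      obtain ⟨q, r, rfl⟩ := SimpleGraph.Walk.mem_support_iff_exists_append.mp hxmem
      have h1 : q.length = G.dist R x := tree_path_length hT q hP.of_append_left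
      have h2 : r.length = G.dist x pp := tree_path_length hT r hP.of_append_right
      have h3 : G.dist x pp = 1 := by rw [SimpleGraph.dist_eq_one_iff_adj]; exact hadj
      rw [SimpleGraph.Walk.length_append, h1, h2, h3] at hPl
      omega
    have hpath : (P.concat hadj.symm).IsPath := by
      rw [← SimpleGraph.Walk.isPath_reverse_iff, SimpleGraph.Walk.reverse_concat]
      exact (hP.reverse.cons (by simpa using hxs))
    refine ⟨P.concat hadj.symm, hpath, ?_, ?_⟩
    · rw [SimpleGraph.Walk.concat_eq_append, SimpleGraph.Walk.support_append]
      exact List.mem_append_left _ P.end_mem_support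
    · rw [SimpleGraph.Walk.length_concat, hPl]
      omega
  obtain ⟨P₁, hP₁, hm₁, hl₁⟩ := key p₁ h₁ hd₁
  obtain ⟨P₂, hP₂, hm₂, hl₂⟩ := key p₂ h₂ hd₂
  have hPP : P₁ = P₂ := (hT.existsUnique_path R x).unique hP₁ hP₂
  subst hPP
  -- both p₁ p₂ on P₁ with dist R pᵢ equal
  obtain ⟨q, r, rfl⟩ := SimpleGraph.Walk.mem_support_iff_exists_append.mp hm₁
  have h1 : q.length = G.dist R p₁ := tree_path_length hT q hP₁.of_append_left
  -- p₂ ∈ support of q ++ r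
  rcases (SimpleGraph.Walk.mem_support_append_iff _ _).mp hm₂ with hmq | hmr
  · -- p₂ on q : R → p₁
    obtain ⟨a, b, rfl⟩ := SimpleGraph.Walk.mem_support_iff_exists_append.mp hmq
    have ha : a.length = G.dist R p₂ :=
      tree_path_length hT a (hP₁.of_append_left.of_append_left)
    have hb : b.length = G.dist p₂ p₁ :=
      tree_path_length hT b (hP₁.of_append_left.of_append_right)
    have : G.dist p₂ p₁ = 0 := by
      have := SimpleGraph.Walk.length_append a b
      omega
    exact ((hT.isConnected.dist_eq_zero_iff).mp this).symm
  · -- p₂ on r : p₁ → x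
    obtain ⟨a, b, rfl⟩ := SimpleGraph.Walk.mem_support_iff_exists_append.mp hmr
    have ha : a.length = G.dist p₁ p₂ :=
      tree_path_length hT a (hP₁.of_append_right.of_append_left)
    have hb : b.length = G.dist p₂ x := tree_path_length hT b
      (hP₁.of_append_right.of_append_right)
    have hr : (a.append b).length = G.dist p₁ x := tree_path_length hT _ hP₁.of_append_right
    have hx1 : G.dist p₁ x = 1 := by rw [SimpleGraph.dist_eq_one_iff_adj]; exact h₁.symm
    have hx2 : G.dist p₂ x ≠ 0 := fun h0 =>
      h₂.ne' ((hT.isConnected.dist_eq_zero_iff).mp h0)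
    have : G.dist p₁ p₂ = 0 := by
      have := SimpleGraph.Walk.length_append a b
      omega
    exact (hT.isConnected.dist_eq_zero_iff).mp this



section Desc
variable (hT : G.IsTree) {v : V}

lemma self_mem_desc (v : V) : v ∈ desc G R v := by
  simp [desc, SimpleGraph.dist_self]

lemma root_not_mem_desc (hT : G.IsTree) (hv : v ≠ R) : R ∉ desc G R v := by
  intro h
  simp only [desc, Set.mem_setOf_eq, SimpleGraph.dist_self] at h
  have h0 : G.dist R v = 0 := by omega
  exact hv.symm ((hT.isConnected.dist_eq_zero_iff).mp h0)

lemma desc_child (hT : G.IsTree) {x y : V} (hx : x ∈ desc G R v) (hadj : G.Adj x y)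
    (hd : G.dist R y = G.dist R x + 1) : y ∈ desc G R v := by
  simp only [desc, Set.mem_setOf_eq] at hx ⊢
  have t1 : G.dist v y ≤ G.dist v x + G.dist x y := hT.isConnected.dist_triangle
  have t2 : G.dist R y ≤ G.dist R v + G.dist v y := hT.isConnected.dist_triangle
  have hxy : G.dist x y = 1 := by rw [SimpleGraph.dist_eq_one_iff_adj]; exact hadj
  omega

lemma desc_parent (hT : G.IsTree) {x p : V} (hx : x ∈ desc G R v) (hxv : x ≠ v)
    (hadj : G.Adj x p) (hd : G.dist R p + 1 = G.dist R x) : p ∈ desc G R v := by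
  -- construct the neighbour of x towards v
  have hdvx : G.dist v x ≠ 0 := fun h0 =>
    hxv ((hT.isConnected.dist_eq_zero_iff).mp h0).symm
  obtain ⟨q, hq, hl⟩ := hT.isConnected.exists_path_of_dist x v
  cases q with
  | nil => exact absurd rfl hxv
  | cons hadj' q' =>
    rename_i w
    have h1 : q'.length = G.dist w v := tree_path_length hT q' hq.of_cons
    rw [SimpleGraph.Walk.length_cons] at hl
    -- G.dist x v = dist w v + 1
    have hwv : G.dist x v = G.dist w v + 1 := by omega
    -- w is a parent of x
    have hRw : G.dist R w + 1 = G.dist R x := by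
      have t1 : G.dist R w ≤ G.dist R v + G.dist v w := hT.isConnected.dist_triangle
      have t2 : G.dist R x ≤ G.dist R w + G.dist w x := hT.isConnected.dist_triangle
      have hwx : G.dist w x = G.dist x w := SimpleGraph.dist_comm
      have hxw : G.dist x w = 1 := by rw [SimpleGraph.dist_eq_one_iff_adj]; exact hadj'
      have hvw : G.dist v w = G.dist w v := SimpleGraph.dist_comm
      have hvx : G.dist v x = G.dist x v := SimpleGraph.dist_comm
      simp only [desc, Set.mem_setOf_eq] at hx
      omega
    have hpw : p = w := parent_unique hT hadj hd hadj' hRw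
    subst hpw
    simp only [desc, Set.mem_setOf_eq] at hx ⊢
    have hvw : G.dist v p = G.dist p v := SimpleGraph.dist_comm
    have hvx : G.dist v x = G.dist x v := SimpleGraph.dist_comm
    omega

lemma desc_nbr (hT : G.IsTree) (hvR : v ≠ R) {x y : V} (hx : x ∈ desc G R v) (hxv : x ≠ v)
    (hadj : G.Adj x y) : y ∈ desc G R v := by
  rcases adj_dist_step hT hadj R with h | h
  · exact desc_child hT hx hadj h
  · exact desc_parent hT hx hxv hadj (by omega)

end Desc


section Fdyn
variable {V : Type*}

/-- integer sign used by the dynamics -/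
def sgn (a : ℤ) : ℤ := if 0 < a then 1 else -1

lemma sgn_pm (a : ℤ) : sgn a = 1 ∨ sgn a = -1 := by unfold sgn; split <;> simp

lemma sgn_mono {a b : ℤ} (h : a ≤ b) : sgn a ≤ sgn b := by
  unfold sgn; split <;> split <;> omega

lemma sgn_neg {a : ℤ} (h : a ≠ 0) : sgn (-a) = - sgn a := by
  unfold sgn; split <;> split <;> omega

/-- the neighbourhood as a `Finset` -/
noncomputable def nbF [Fintype V] (G : SimpleGraph V) (w : V) : Finset V :=
  (G.neighborSet w).toFinite.toFinset

lemma mem_nbF [Fintype V] (G : SimpleGraph V) {w u : V} :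
    u ∈ nbF G w ↔ G.Adj w u := by
  simp [nbF, Set.Finite.mem_toFinset]

lemma finsum_nbr [Fintype V] (G : SimpleGraph V) (f : V → ℤ) (w : V) :
    ∑ᶠ u ∈ G.neighborSet w, f u = ∑ u ∈ nbF G w, f u := by
  have hc : (↑(nbF G w) : Set V) = G.neighborSet w :=
    (G.neighborSet w).toFinite.coe_toFinset
  rw [← hc, finsum_mem_coe_finset]

lemma degree'_eq_card [Fintype V] (G : SimpleGraph V) (w : V) :
    degree' G w = (nbF G w).card := by
  rw [degree', Set.ncard_eq_toFinset_card _ (G.neighborSet w).toFinite]; rfl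

lemma dyn_eq_sgn [Fintype V] (G : SimpleGraph V) (σ : V → ℤ) (s : ℕ) (w : V) :
    dyn G σ (s + 1) w = sgn (∑ u ∈ nbF G w, dyn G σ s u) := by
  show (if 0 < ∑ᶠ u ∈ G.neighborSet w, dyn G σ s u then 1 else -1) = _
  rw [finsum_nbr]; rfl

lemma dyn_pm [Fintype V] (G : SimpleGraph V) {σ : V → ℤ} (hσ : PM σ) (s : ℕ) :
    PM (dyn G σ s) := by
  cases s with
  | zero => exact hσ
  | succ s => intro w; rw [dyn_eq_sgn]; exact sgn_pm _

open Classical in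
/-- majority dynamics on `D` with prescribed opinions `bd` outside `D`. -/
noncomputable def fdyn [Fintype V] (G : SimpleGraph V) (D : Set V) (bd : ℕ → V → ℤ)
    (σ : V → ℤ) : ℕ → V → ℤ
  | 0 => fun w => if w ∈ D then σ w else bd 0 w
  | s + 1 => fun w =>
      if w ∈ D then sgn (∑ u ∈ nbF G w, fdyn G D bd σ s u) else bd (s + 1) w

section
variable [Fintype V] {G : SimpleGraph V} {D : Set V} {bd bd' : ℕ → V → ℤ} {σ σ' : V → ℤ}

lemma fdyn_not_mem (hw : (w : V) ∉ D) (s : ℕ) : fdyn G D bd σ s w = bd s w := by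
  cases s <;> simp [fdyn, hw]

lemma fdyn_mem_zero (hw : (w : V) ∈ D) : fdyn G D bd σ 0 w = σ w := by
  simp [fdyn, hw]

lemma fdyn_mem_succ (hw : (w : V) ∈ D) (s : ℕ) :
    fdyn G D bd σ (s + 1) w = sgn (∑ u ∈ nbF G w, fdyn G D bd σ s u) := by
  simp [fdyn, hw]

lemma fdyn_pm (hbd : ∀ s w, bd s w = 1 ∨ bd s w = -1) (hσ : PM σ) (s : ℕ) (w : V) :
    fdyn G D bd σ s w = 1 ∨ fdyn G D bd σ s w = -1 := by
  by_cases hw : w ∈ D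
  · cases s with
    | zero => rw [fdyn_mem_zero hw]; exact hσ w
    | succ s => rw [fdyn_mem_succ hw]; exact sgn_pm _
  · rw [fdyn_not_mem hw]; exact hbd s w

/-- monotonicity of the forced dynamics with respect to the orientation `pat`. -/
lemma fdyn_mono (pat : ℕ → V → ℤ)
    (halign : ∀ ⦃x y : V⦄, G.Adj x y → ∀ s, pat s y = pat (s + 1) x)
    (hpat : ∀ s w, pat s w = 1 ∨ pat s w = -1)
    (hbd : ∀ s (w : V), w ∉ D → pat s w * bd s w ≤ pat s w * bd' s w)
    (hσ : ∀ w ∈ D, pat 0 w * σ w ≤ pat 0 w * σ' w) :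
    ∀ s (w : V), pat s w * fdyn G D bd σ s w ≤ pat s w * fdyn G D bd' σ' s w := by
  intro s
  induction s with
  | zero =>
    intro w
    by_cases hw : w ∈ D
    · rw [fdyn_mem_zero hw, fdyn_mem_zero hw]; exact hσ w hw
    · rw [fdyn_not_mem hw, fdyn_not_mem hw]; exact hbd 0 w hw
  | succ s ih =>
    intro w
    by_cases hw : w ∈ D
    · rw [fdyn_mem_succ hw, fdyn_mem_succ hw]
      rcases hpat (s + 1) w with hp | hp
      · rw [hp, one_mul, one_mul]
        apply sgn_mono
        apply Finset.sum_le_sum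
        intro n hn
        have hal : pat s n = pat (s + 1) w := halign ((mem_nbF G).mp hn) s
        have := ih n
        rw [hal, hp, one_mul, one_mul] at this
        exact this
      · rw [hp, neg_one_mul, neg_one_mul, neg_le_neg_iff]
        apply sgn_mono
        apply Finset.sum_le_sum
        intro n hn
        have hal : pat s n = pat (s + 1) w := halign ((mem_nbF G).mp hn) s
        have := ih n
        rw [hal, hp, neg_one_mul, neg_one_mul, neg_le_neg_iff] at this
        exact this
    · rw [fdyn_not_mem hw, fdyn_not_mem hw]; exact hbd (s + 1) w hw

lemma odd_sum_iff {s : Finset V} {f : V → ℤ} (hf : ∀ v ∈ s, Odd (f v)) :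
    Odd (∑ v ∈ s, f v) ↔ Odd s.card := by
  classical
  induction s using Finset.induction_on with
  | empty => simp
  | @insert a s ha ih =>
    have ha' := hf a (Finset.mem_insert_self _ _)
    have ih' := ih (fun v hv => hf v (Finset.mem_insert_of_mem hv))
    rw [Finset.sum_insert ha, Finset.card_insert_of_notMem ha]
    have h1 : Odd (f a + ∑ v ∈ s, f v) ↔ (Odd (f a) ↔ Even (∑ v ∈ s, f v)) := Int.odd_add
    have h2 : Even (∑ v ∈ s, f v) ↔ ¬ Odd (∑ v ∈ s, f v) := Int.not_odd_iff_even.symm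
    have h3 : Even s.card ↔ ¬ Odd s.card := Nat.not_odd_iff_even.symm
    have h4 : Odd (s.card + 1) ↔ ¬ Odd s.card := Nat.odd_add_one
    tauto

lemma odd_sum {s : Finset V} {f : V → ℤ} (hf : ∀ v ∈ s, Odd (f v)) (h : Odd s.card) :
    Odd (∑ v ∈ s, f v) := (odd_sum_iff hf).mpr h

/-- duality: negating both the initial condition and the boundary negates everything. -/
lemma fdyn_neg (hodd : ∀ w ∈ D, Odd (nbF G w).card)
    (hbd : ∀ s w, bd s w = 1 ∨ bd s w = -1) (hσ : PM σ) :
    ∀ s (w : V), fdyn G D (fun s w => -(bd s w)) (fun w => -(σ w)) s w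
      = - fdyn G D bd σ s w := by
  intro s
  induction s with
  | zero =>
    intro w
    by_cases hw : w ∈ D
    · rw [fdyn_mem_zero hw, fdyn_mem_zero hw]
    · rw [fdyn_not_mem hw, fdyn_not_mem hw]
  | succ s ih =>
    intro w
    by_cases hw : w ∈ D
    · rw [fdyn_mem_succ hw, fdyn_mem_succ hw]
      have hsum : ∑ u ∈ nbF G w, fdyn G D (fun s w => -(bd s w)) (fun w => -(σ w)) s u
          = -∑ u ∈ nbF G w, fdyn G D bd σ s u := by
        rw [← Finset.sum_neg_distrib]
        exact Finset.sum_congr rfl fun n _ => ih n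
      rw [hsum]
      apply sgn_neg
      intro h0
      have : Odd (∑ u ∈ nbF G w, fdyn G D bd σ s u) := by
        apply odd_sum _ (hodd w hw)
        intro n _
        rcases fdyn_pm hbd hσ s n with h | h <;> rw [h] <;> decide
      rw [h0] at this
      simp at this
    · rw [fdyn_not_mem hw, fdyn_not_mem hw]

end
end Fdyn

section Counting
variable {α : Type*} [Fintype α] [DecidableEq α]

lemma half_card (𝒜 : Finset (Finset α)) (hmap : ∀ S : Finset α, S ∉ 𝒜 → Sᶜ ∈ 𝒜) :
    2 ^ Fintype.card α ≤ 2 * 𝒜.card := by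
  classical
  have hsum : 𝒜.card + 𝒜ᶜ.card = 2 ^ Fintype.card α := by
    rw [Finset.card_add_card_compl, Fintype.card_finset]
  have hle : 𝒜ᶜ.card ≤ 𝒜.card := by
    apply Finset.card_le_card_of_injOn compl
    · intro S hS
      exact hmap S (by simpa using hS)
    · intro S _ S' _ h
      exact compl_injective h
  omega

lemma mem_foldr_inter (L : List (Finset α)) (S : α) :
    S ∈ L.foldr (· ∩ ·) Finset.univ ↔ ∀ A ∈ L, S ∈ A := by
  induction L with
  | nil => simp
  | cons A L ih => simp [Finset.mem_inter, ih]

lemma harris_fold (L : List (Finset (Finset α)))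
    (hup : ∀ A ∈ L, IsUpperSet (↑A : Set (Finset α)))
    (hcard : ∀ A ∈ L, 2 ^ Fintype.card α ≤ 2 * A.card) :
    2 ^ Fintype.card α ≤ 2 ^ L.length * (L.foldr (· ∩ ·) Finset.univ).card ∧
      IsUpperSet (↑(L.foldr (· ∩ ·) Finset.univ) : Set (Finset α)) := by
  induction L with
  | nil =>
    constructor
    · simp [Finset.card_univ, Fintype.card_finset]
    · simp only [List.foldr_nil, Finset.coe_univ]
      exact isUpperSet_univ
  | cons A L ih =>
    obtain ⟨ihc, ihu⟩ := ih (fun B hB => hup B (List.mem_cons_of_mem _ hB))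
      (fun B hB => hcard B (List.mem_cons_of_mem _ hB))
    have hAu : IsUpperSet (↑A : Set (Finset α)) := hup A List.mem_cons_self
    have hAc : 2 ^ Fintype.card α ≤ 2 * A.card := hcard A List.mem_cons_self
    set I := L.foldr (· ∩ ·) Finset.univ with hI
    have hHK : A.card * I.card ≤ 2 ^ Fintype.card α * (A ∩ I).card :=
      hAu.le_card_inter_finset ihu
    constructor
    · have key : I.card ≤ 2 * (A ∩ I).card := by
        have h1 : 2 ^ Fintype.card α * I.card ≤ 2 * A.card * I.card :=
          Nat.mul_le_mul_right _ hAc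
        have h2 : 2 * A.card * I.card = 2 * (A.card * I.card) := by ring
        have h3 : 2 * (A.card * I.card) ≤ 2 * (2 ^ Fintype.card α * (A ∩ I).card) :=
          Nat.mul_le_mul_left _ hHK
        have h4 : 2 * (2 ^ Fintype.card α * (A ∩ I).card)
            = 2 ^ Fintype.card α * (2 * (A ∩ I).card) := by ring
        have h5 : 2 ^ Fintype.card α * I.card ≤ 2 ^ Fintype.card α * (2 * (A ∩ I).card) := by
          omega
        exact Nat.le_of_mul_le_mul_left h5 (Nat.pow_pos (by norm_num))
      calc 2 ^ Fintype.card α ≤ 2 ^ L.length * I.card := ihc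
        _ ≤ 2 ^ L.length * (2 * (A ∩ I).card) := Nat.mul_le_mul_left _ key
        _ = 2 ^ (A :: L).length * (A ∩ I).card := by
            simp [List.length_cons]; ring
    · show IsUpperSet (↑(A ∩ I) : Set (Finset α))
      rw [Finset.coe_inter]
      exact hAu.inter ihu

lemma pm_eq_of_le {p y : ℤ} (hp : p = 1 ∨ p = -1) (hy : y = 1 ∨ y = -1)
    (h : 1 ≤ p * y) : y = p := by
  rcases hp with rfl | rfl <;> rcases hy with rfl | rfl <;> omega

end Counting

end MajAux

open MajAux

/-- There is a constant `C > 0` such that, for every even `k > 2`, every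
opinion `ξ ∈ {-1,1}`, every non-root non-leaf vertex `v` of a perfect `k`-ary tree with
uniformly random initial opinions, and every `t ≥ 2`, the probability that `v` is
`(≤ t)`-stable with `ξ_t(v) = ξ` is at least `2^{-Ctk}`. -/
theorem leStable_probability :
    ∃ C : ℝ, 0 < C ∧
      ∀ (V : Type) [Fintype V] (G : SimpleGraph V) (R : V) (k h : ℕ),
        Even k → 2 < k → IsPerfectKAry G R k h →
        ∀ ξv : ℤ, (ξv = 1 ∨ ξv = -1) → ∀ v : V, v ≠ R → ¬ IsLeaf G v →
        ∀ t : ℕ, 2 ≤ t →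
        (2 : ℝ) ^ (-(C * t * k)) * 2 ^ Fintype.card V ≤
          ({b : V → Bool |
            LeStable G R (signify b) v t ∧ dyn G (signify b) t v = ξv}.ncard : ℝ) := by
  classical
  refine ⟨2, by norm_num, ?_⟩
  intro V _ G R k h hkE hk2 hPK ξv hξ v hvR hvL t ht
  classical
  obtain ⟨hT, hdeg, -, -⟩ := hPK
  -- the alternating space-time pattern
  set pat : ℕ → V → ℤ :=
    fun s w => if (G.dist R w + s) % 2 = (G.dist R v + t) % 2 then ξv else -ξv with hpatdef
  have hpatPM : ∀ (s : ℕ) (w : V), pat s w = 1 ∨ pat s w = -1 := by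
    intro s w
    rcases hξ with h1 | h1 <;> simp only [hpatdef] <;> split <;> simp [h1]
  have hpatsq : ∀ (s : ℕ) (w : V), pat s w * pat s w = 1 := by
    intro s w; rcases hpatPM s w with h1 | h1 <;> rw [h1] <;> norm_num
  have halign : ∀ ⦃x y : V⦄, G.Adj x y → ∀ s : ℕ, pat s y = pat (s + 1) x := by
    intro x y hadj s
    rcases MajAux.adj_dist_step hT hadj R with hd | hd <;>
    · simp only [hpatdef]
      have hmod : (G.dist R y + s) % 2 = (G.dist R x + (s + 1)) % 2 := by omega
      rw [hmod]
  have hparity : ∀ s s' : ℕ, s % 2 = s' % 2 → pat s v = pat s' v := by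
    intro s s' hp
    simp only [hpatdef]
    have hmod : (G.dist R v + s) % 2 = (G.dist R v + s') % 2 := by omega
    rw [hmod]
  have hpattv : pat t v = ξv := by simp [hpatdef]
  -- the subtree below v
  set D : Set V := desc G R v \ {v} with hDdef
  have hvdesc : v ∈ desc G R v := MajAux.self_mem_desc v
  have hvD : v ∉ D := by simp [hDdef]
  have hDdesc : ∀ w ∈ D, w ∈ desc G R v := fun w hw => hw.1
  -- parent and children of v
  obtain ⟨p₀, hp₀adj, hp₀d⟩ := MajAux.exists_parent hT R hvR
  have hp₀mem : p₀ ∈ nbF G v := (mem_nbF G).mpr hp₀adj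
  set CH : Finset V := (nbF G v).erase p₀ with hCHdef
  have hdegv : (nbF G v).card = k + 1 := by
    rw [← degree'_eq_card]
    rcases hdeg v with h1 | h1
    · exact absurd h1 hvL
    · exact h1
  have hCHcard : CH.card = k := by
    have h1 : CH.card = (nbF G v).card - 1 := by
      rw [hCHdef]; exact Finset.card_erase_of_mem hp₀mem
    omega
  have hCHchild : ∀ c ∈ CH, G.Adj v c ∧ G.dist R c = G.dist R v + 1 := by
    intro c hc
    have hadj : G.Adj v c := (mem_nbF G).mp (Finset.mem_of_mem_erase hc)
    refine ⟨hadj, ?_⟩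
    rcases MajAux.adj_dist_step hT hadj R with h1 | h1
    · exact h1
    · exact absurd (MajAux.parent_unique hT hadj (by omega) hp₀adj hp₀d)
        (Finset.ne_of_mem_erase hc)
  have hCHD : ∀ c ∈ CH, c ∈ D := by
    intro c hc
    obtain ⟨hadj, hdc⟩ := hCHchild c hc
    refine ⟨MajAux.desc_child hT hvdesc hadj hdc, ?_⟩
    simp only [Set.mem_singleton_iff]
    intro h1; rw [h1] at hdc; omega
  have hnbrdesc : ∀ w ∈ D, ∀ n ∈ nbF G w, n ∈ desc G R v := by
    intro w hw n hn
    have hwv : w ≠ v := by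
      intro h1; exact hw.2 (by simp [h1])
    exact MajAux.desc_nbr hT hvR (hDdesc w hw) hwv ((mem_nbF G).mp hn)
  have hodd : ∀ w ∈ D, Odd (nbF G w).card := by
    intro w _
    rw [← degree'_eq_card]
    rcases hdeg w with h1 | h1 <;> rw [h1]
    · exact ⟨0, rfl⟩
    · obtain ⟨m, hm⟩ := hkE
      exact ⟨m, by omega⟩
  -- configurations indexed by finsets
  set σS : Finset V → V → ℤ := fun S w => if w ∈ S then pat 0 w else -pat 0 w with hσSdef
  have hσSPM : ∀ S, PM (σS S) := by
    intro S w
    rcases hpatPM 0 w with h1 | h1 <;> simp only [hσSdef] <;> split <;> simp [h1]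
  have hσSc : ∀ S : Finset V, σS Sᶜ = fun w => -(σS S w) := by
    intro S; funext w
    by_cases hw : w ∈ S <;> simp [hσSdef, hw]
  have hor : ∀ (S : Finset V) (w : V), pat 0 w * σS S w = if w ∈ S then 1 else -1 := by
    intro S w
    by_cases hw : w ∈ S
    · simp only [hσSdef, hw, if_true, hpatsq 0 w]
    · simp only [hσSdef, hw, if_false, mul_neg, hpatsq 0 w]
  -- the events
  set Ev : V → ℕ → Finset (Finset V) :=
    fun c s => Finset.univ.filter (fun S => fdyn G D pat (σS S) s c = pat s c) with hEvdef
  set Ev0 : Finset (Finset V) := Finset.univ.filter (fun S => v ∈ S) with hEv0def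
  have hEvUp : ∀ (c : V) (s : ℕ), IsUpperSet (↑(Ev c s) : Set (Finset V)) := by
    intro c s S S' hSS hS
    simp only [Finset.mem_coe, hEvdef, Finset.mem_filter, Finset.mem_univ, true_and] at hS ⊢
    have hmono := fdyn_mono (G := G) (D := D) (bd := pat) (bd' := pat)
      (σ := σS S) (σ' := σS S') pat halign hpatPM
      (fun s w _ => le_refl _)
      (fun w _ => by
        rw [hor S w, hor S' w]
        by_cases h1 : w ∈ S
        · rw [if_pos h1, if_pos (hSS h1)]
        · by_cases h2 : w ∈ S' <;> simp [h1, h2]) s c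
    rw [hS, hpatsq s c] at hmono
    exact pm_eq_of_le (hpatPM s c) (fdyn_pm hpatPM (hσSPM S') s c) hmono
  have hEv0Up : IsUpperSet (↑Ev0 : Set (Finset V)) := by
    intro S S' hSS hS
    simp only [Finset.mem_coe, hEv0def, Finset.mem_filter, Finset.mem_univ, true_and] at hS ⊢
    exact hSS hS
  have hEv0half : 2 ^ Fintype.card V ≤ 2 * Ev0.card := by
    apply half_card
    intro S hS
    simp only [hEv0def, Finset.mem_filter, Finset.mem_univ, true_and] at hS ⊢
    simpa [Finset.mem_compl] using hS
  have hEvhalf : ∀ (c : V) (s : ℕ), 2 ^ Fintype.card V ≤ 2 * (Ev c s).card := by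
    intro c s
    apply half_card
    intro S hS
    simp only [hEvdef, Finset.mem_filter, Finset.mem_univ, true_and] at hS ⊢
    have hbadpm := fdyn_pm (G := G) (D := D) (bd := pat) hpatPM (hσSPM S) s c
    have hbad : fdyn G D pat (σS S) s c = -pat s c := by
      rcases hbadpm with h1 | h1 <;> rcases hpatPM s c with h2 | h2 <;>
        rw [h1, h2] at hS ⊢ <;> first
          | rfl
          | (exfalso; exact hS rfl)
          | norm_num
    have hnegg := fdyn_neg (G := G) (D := D) (bd := pat) (σ := σS S) hodd hpatPM (hσSPM S) s c
    rw [hbad, neg_neg, ← hσSc S] at hnegg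
    have hmono := fdyn_mono (G := G) (D := D) (bd := fun s w => -(pat s w)) (bd' := pat)
      (σ := σS Sᶜ) (σ' := σS Sᶜ) pat halign hpatPM
      (fun s w _ => by rw [mul_neg, hpatsq s w]; norm_num)
      (fun w _ => le_refl _) s c
    rw [hnegg, hpatsq s c] at hmono
    exact pm_eq_of_le (hpatPM s c) (fdyn_pm hpatPM (hσSPM Sᶜ) s c) hmono
  -- the list of events
  set L : List (Finset (Finset V)) :=
    Ev0 :: ((Finset.range t ×ˢ CH).toList.map (fun p => Ev p.2 p.1)) with hLdef
  have hLlen : L.length = 1 + t * k := by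
    simp only [hLdef, List.length_cons, List.length_map, Finset.length_toList,
      Finset.card_product, Finset.card_range, hCHcard]
    omega
  have hEvmemL : ∀ c ∈ CH, ∀ s < t, Ev c s ∈ L := by
    intro c hc s hs
    apply List.mem_cons_of_mem
    apply List.mem_map.mpr
    exact ⟨(s, c), Finset.mem_toList.mpr
      (Finset.mem_product.mpr ⟨Finset.mem_range.mpr hs, hc⟩), rfl⟩
  have hL := harris_fold L
    (by
      intro A hA
      rcases List.mem_cons.mp hA with h1 | h1
      · rw [h1]; exact hEv0Up
      · obtain ⟨p, hp, rfl⟩ := List.mem_map.mp h1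
        exact hEvUp p.2 p.1)
    (by
      intro A hA
      rcases List.mem_cons.mp hA with h1 | h1
      · rw [h1]; exact hEv0half
      · obtain ⟨p, hp, rfl⟩ := List.mem_map.mp h1
        exact hEvhalf p.2 p.1)
  obtain ⟨hGcard, -⟩ := hL
  -- the key deterministic consequence
  have hk3 : (3 : ℤ) ≤ (k : ℤ) := by exact_mod_cast hk2
  have hsgn : ∀ x e : ℤ, (x = 1 ∨ x = -1) → (e = 1 ∨ e = -1) →
      sgn (x + (k : ℤ) * e) = e := by
    intro x e hx he
    rcases hx with rfl | rfl <;> rcases he with rfl | rfl <;>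
      simp only [sgn] <;> split <;> omega
  have hmain : ∀ S ∈ L.foldr (· ∩ ·) Finset.univ, ∀ σ' : V → ℤ, PM σ' →
      (∀ w ∈ desc G R v, σ' w = σS S w) →
      ∀ s, s ≤ t → dyn G σ' s v = pat s v ∧
        ∀ w ∈ D, dyn G σ' s w = fdyn G D pat (σS S) s w := by
    intro S hS σ' hσ' hag s
    induction s with
    | zero =>
      intro _
      constructor
      · show σ' v = pat 0 v
        rw [hag v hvdesc]
        have hvS : v ∈ S := by
          have h1 := (mem_foldr_inter L S).mp hS Ev0 List.mem_cons_self
          simpa [hEv0def] using h1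
        simp [hσSdef, hvS]
      · intro w hw
        show σ' w = _
        rw [fdyn_mem_zero hw, hag w (hDdesc w hw)]
    | succ s ih =>
      intro hst
      obtain ⟨ihv, ihD⟩ := ih (by omega)
      have hchpat : ∀ c ∈ CH, dyn G σ' s c = pat s c := by
        intro c hc
        have h1 : dyn G σ' s c = fdyn G D pat (σS S) s c := ihD c (hCHD c hc)
        have h2 : S ∈ Ev c s := (mem_foldr_inter L S).mp hS _ (hEvmemL c hc s (by omega))
        have h3 : fdyn G D pat (σS S) s c = pat s c := by
          simpa [hEvdef] using h2
        rw [h1, h3]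
      constructor
      · rw [dyn_eq_sgn]
        have hsplit : nbF G v = insert p₀ CH := (Finset.insert_erase hp₀mem).symm
        have hp₀CH : p₀ ∉ CH := Finset.notMem_erase _ _
        rw [hsplit, Finset.sum_insert hp₀CH]
        have hsum : ∑ c ∈ CH, dyn G σ' s c = (k : ℤ) * pat (s + 1) v := by
          rw [Finset.sum_congr rfl (fun c hc => by
            rw [hchpat c hc, halign (hCHchild c hc).1 s])]
          rw [Finset.sum_const, hCHcard]
          simp
        rw [hsum]
        exact hsgn _ _ (dyn_pm G hσ' s p₀) (hpatPM (s + 1) v)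
      · intro w hw
        rw [dyn_eq_sgn, fdyn_mem_succ hw]
        congr 1
        apply Finset.sum_congr rfl
        intro n hn
        have hndesc : n ∈ desc G R v := hnbrdesc w hw n hn
        by_cases hnv : n = v
        · subst hnv
          rw [ihv, fdyn_not_mem hvD]
        · exact ihD n ⟨hndesc, by simp [hnv]⟩
  -- from finsets to boolean configurations
  set Ψ : Finset V → (V → Bool) := fun S w => if σS S w = 1 then true else false with hΨdef
  have hΨsig : ∀ S, signify (Ψ S) = σS S := by
    intro S; funext w
    rcases hσSPM S w with h1 | h1 <;> simp [signify, hΨdef, h1]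
  have hΨval : ∀ S w, σS S w = if Ψ S w then 1 else -1 := by
    intro S w
    rcases hσSPM S w with h1 | h1 <;> simp [hΨdef, h1]
  have hΨinj : Function.Injective Ψ := by
    intro S S' hSS
    have hval : ∀ w, σS S w = σS S' w := by
      intro w; rw [hΨval S w, hΨval S' w, hSS]
    ext w
    have hw := hval w
    by_cases h1 : w ∈ S <;> by_cases h2 : w ∈ S'
    · simp [h1, h2]
    · exfalso
      simp only [hσSdef, if_pos h1, if_neg h2] at hw
      rcases hpatPM 0 w with hp | hp <;> rw [hp] at hw <;> omega
    · exfalso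
      simp only [hσSdef, if_neg h1, if_pos h2] at hw
      rcases hpatPM 0 w with hp | hp <;> rw [hp] at hw <;> omega
    · simp [h1, h2]
  have hsub : ∀ S ∈ L.foldr (· ∩ ·) Finset.univ, Ψ S ∈ {b : V → Bool |
      LeStable G R (signify b) v t ∧ dyn G (signify b) t v = ξv} := by
    intro S hS
    have hPMs : PM (signify (Ψ S)) := by
      intro w; unfold signify; split
      · exact Or.inl rfl
      · exact Or.inr rfl
    constructor
    · intro σ' hσ' hag t' ht' hpar
      have hag' : ∀ w ∈ desc G R v, σ' w = σS S w := by
        intro w hw; rw [hag w hw, hΨsig]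
      have h1 := (hmain S hS σ' hσ' hag' t' (le_of_lt ht')).1
      have h2 := (hmain S hS σ' hσ' hag' t le_rfl).1
      rw [h1, h2]
      exact hparity t' t hpar
    · have hag' : ∀ w ∈ desc G R v, signify (Ψ S) w = σS S w := fun w _ => by rw [hΨsig]
      have h2 := (hmain S hS _ hPMs hag' t le_rfl).1
      rw [h2, hpattv]
  -- counting
  have hcount : ((L.foldr (· ∩ ·) Finset.univ).card : ℝ) ≤
      (({b : V → Bool | LeStable G R (signify b) v t ∧
        dyn G (signify b) t v = ξv}.ncard : ℕ) : ℝ) := by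
    have himg : Ψ '' (↑(L.foldr (· ∩ ·) Finset.univ) : Set (Finset V)) ⊆
        {b : V → Bool | LeStable G R (signify b) v t ∧ dyn G (signify b) t v = ξv} := by
      rintro b ⟨S, hS, rfl⟩
      exact hsub S (by simpa using hS)
    have h1 : (Ψ '' (↑(L.foldr (· ∩ ·) Finset.univ) : Set (Finset V))).ncard
        = (L.foldr (· ∩ ·) Finset.univ).card := by
      rw [Set.ncard_image_of_injective _ hΨinj, Set.ncard_coe_finset]
    have h2 := Set.ncard_le_ncard himg (Set.toFinite _)
    rw [h1] at h2
    exact_mod_cast h2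
  -- final arithmetic
  rw [hLlen] at hGcard
  have hR1 : (2 : ℝ) ^ Fintype.card V ≤
      2 ^ (1 + t * k) * ((L.foldr (· ∩ ·) Finset.univ).card : ℝ) := by
    exact_mod_cast hGcard
  have htk1 : (1 : ℕ) ≤ t * k := by
    have h1 := Nat.mul_le_mul (show 1 ≤ t by omega) (show 1 ≤ k by omega)
    simpa using h1
  have e1 : (2 : ℝ) ^ (-(2 * (t : ℝ) * (k : ℝ))) * 2 ^ Fintype.card V ≤
      ((L.foldr (· ∩ ·) Finset.univ).card : ℝ) := by
    have hpow : (0 : ℝ) < 2 ^ (1 + t * k) := by positivity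
    rw [← Real.rpow_natCast (2 : ℝ) (1 + t * k)] at hR1
    have hle : (2 : ℝ) ^ (-(2 * (t : ℝ) * (k : ℝ))) ≤
        (2 : ℝ) ^ (-(((1 + t * k : ℕ) : ℝ))) := by
      apply Real.rpow_le_rpow_of_exponent_le (by norm_num)
      have hcast : (1 : ℝ) ≤ (t : ℝ) * (k : ℝ) := by exact_mod_cast htk1
      push_cast
      linarith
    calc (2 : ℝ) ^ (-(2 * (t : ℝ) * (k : ℝ))) * 2 ^ Fintype.card V
        ≤ (2 : ℝ) ^ (-(((1 + t * k : ℕ) : ℝ))) * 2 ^ Fintype.card V := by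
          apply mul_le_mul_of_nonneg_right hle (by positivity)
      _ ≤ ((L.foldr (· ∩ ·) Finset.univ).card : ℝ) := by
          rw [Real.rpow_neg (by norm_num)]
          rw [inv_mul_le_iff₀ (by positivity)]
          linarith [hR1]
  calc (2 : ℝ) ^ (-(2 * (t : ℝ) * (k : ℝ))) * 2 ^ Fintype.card V
      ≤ ((L.foldr (· ∩ ·) Finset.univ).card : ℝ) := e1
    _ ≤ _ := hcount
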